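/- Let X be a type, m ≥ 1, D : Fin m → X a database, k : ℕ, and q : Fin k → (X → Bool) a tuple of counting queries. Let α, β be reals with 0 ≤ α < 1/2, and let μ : PMF (Fin k → ℝ) be a distribution over answer vectors such that the probability under μ of the event {a | ∀ j : Fin k, |a j − q_j(D)| ≤ α} is at least 1 − β. Then the probability under μ of the event {a | ∃ j : Fin k, ∃ b : Bool, (∀ i : Fin m, q_j (D i) = b) ∧ decide (1/2 ≤ a j) ≠ b} is at most β. -/

import Mathlib

open scoped ENNReal

/-- The value of a counting query `q` on a database `D : Fin m → X`. -/
noncomputable def countingQueryValue {X : Type*} {m : ℕ} (q : X → Bool) (D : Fin m → X) : ℝ :=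
  ((Finset.univ.filter fun i : Fin m => q (D i) = true).card : ℝ) / m

/-- Claim 4.2: if a distribution over answer vectors is `α`-accurate (with `α < 1/2`)
except with probability `β`, then except with probability `β` the rounded answers agree
with `b` on every query on which all database rows evaluate to the same bit `b`. -/
theorem accurate_implies_available
    {X : Type*} (m : ℕ) (hm : 1 ≤ m) (D : Fin m → X) (k : ℕ) (q : Fin k → X → Bool)
    (α β : ℝ) (hα0 : 0 ≤ α) (hα : α < 1 / 2) (μ : PMF (Fin k → ℝ))
    (hacc : ENNReal.ofReal (1 - β) ≤
      ∑' a : {a : Fin k → ℝ // ∀ j : Fin k, |a j - countingQueryValue (q j) D| ≤ α}, μ a.1) :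
    ∑' a : {a : Fin k → ℝ // ∃ j : Fin k, ∃ b : Bool,
        (∀ i : Fin m, q j (D i) = b) ∧ decide ((1 : ℝ) / 2 ≤ a j) ≠ b}, μ a.1
      ≤ ENNReal.ofReal β := by
  set S : Set (Fin k → ℝ) := {a | ∀ j : Fin k, |a j - countingQueryValue (q j) D| ≤ α} with hS
  set T : Set (Fin k → ℝ) := {a | ∃ j : Fin k, ∃ b : Bool,
      (∀ i : Fin m, q j (D i) = b) ∧ decide ((1 : ℝ) / 2 ≤ a j) ≠ b} with hT
  have hm0 : (0 : ℝ) < m := by exact_mod_cast hm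
  -- T ⊆ Sᶜ
  have hsub : T ⊆ Sᶜ := by
    rintro a ⟨j, b, hb, hne⟩ haS
    have hacc_j := haS j
    cases b with
    | false =>
      have hval : countingQueryValue (q j) D = 0 := by
        unfold countingQueryValue
        have : (Finset.univ.filter fun i : Fin m => q j (D i) = true) = ∅ := by
          apply Finset.filter_false_of_mem
          intro i _
          simp [hb i]
        simp [this]
      rw [hval, sub_zero] at hacc_j
      have : ¬ ((1 : ℝ) / 2 ≤ a j) := by
        intro h
        have := (abs_le.mp hacc_j).2
        linarith
      simp [this] at hne
      norm_num at hne
      linarith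
    | true =>
      have hval : countingQueryValue (q j) D = 1 := by
        unfold countingQueryValue
        have : (Finset.univ.filter fun i : Fin m => q j (D i) = true) = Finset.univ := by
          apply Finset.filter_true_of_mem
          intro i _
          exact hb i
        rw [this, Finset.card_univ, Fintype.card_fin]
        field_simp
      rw [hval] at hacc_j
      have : (1 : ℝ) / 2 ≤ a j := by
        have := (abs_le.mp hacc_j).1
        linarith
      simp [this] at hne
      norm_num at hne
      linarith
  -- sum over S plus sum over Sᶜ equals 1
  have htotal : (∑' a : S, μ a.1) + (∑' a : ↥(Sᶜ), μ a.1) = 1 := by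
    rw [Summable.tsum_add_tsum_compl (f := fun a => μ a) ENNReal.summable ENNReal.summable]
    exact μ.tsum_coe
  have hSle : (∑' a : S, μ a.1) ≤ 1 := le_of_le_of_eq le_self_add htotal
  -- β ≥ 0 case analysis
  have hβ0 : 0 ≤ β := by
    by_contra h
    push_neg at h
    have h1 : (1 : ℝ≥0∞) < ENNReal.ofReal (1 - β) := by
      rw [← ENNReal.ofReal_one]
      exact ENNReal.ofReal_lt_ofReal_iff_of_nonneg zero_le_one |>.mpr (by linarith)
    exact absurd (lt_of_lt_of_le h1 (hacc.trans hSle)) (lt_irrefl _)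
  -- sum over T ≤ sum over Sᶜ
  have hTle : (∑' a : T, μ a.1) ≤ ∑' a : ↥(Sᶜ), μ a.1 := by
    rw [tsum_subtype, tsum_subtype]
    exact ENNReal.tsum_le_tsum fun a =>
      Set.indicator_le_indicator_of_subset hsub (fun _ => zero_le) a
  refine hTle.trans ?_
  have hcompl : (∑' a : ↥(Sᶜ), μ a.1) ≤ 1 - ENNReal.ofReal (1 - β) := by
    apply ENNReal.le_sub_of_add_le_left (ENNReal.ofReal_ne_top)
    calc ENNReal.ofReal (1 - β) + (∑' a : ↥(Sᶜ), μ a.1)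
        ≤ (∑' a : S, μ a.1) + (∑' a : ↥(Sᶜ), μ a.1) := add_le_add_left hacc _
      _ = 1 := htotal
  refine hcompl.trans ?_
  rcases le_or_gt β 1 with hβ1 | hβ1
  · have : (1 : ℝ≥0∞) = ENNReal.ofReal β + ENNReal.ofReal (1 - β) := by
      rw [← ENNReal.ofReal_add hβ0 (by linarith), ← ENNReal.ofReal_one]
      norm_num
    rw [this]
    simp [ENNReal.add_sub_cancel_right ENNReal.ofReal_ne_top]
  · calc (1 : ℝ≥0∞) - ENNReal.ofReal (1 - β) ≤ 1 := tsub_le_self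
      _ ≤ ENNReal.ofReal β := by
          rw [← ENNReal.ofReal_one]
          exact ENNReal.ofReal_le_ofReal hβ1.le
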